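/- Let X = !![0,1;1,0], Y = !![0,i;-i,0], Z = !![1,0;0,-1] be the 2×2 Pauli matrices and I₂ the 2×2 identity. For M₀ ∈ M₂(ℂ), the subspace 𝒱_{M₀} := span_ℂ{M₀, X M₀ X} contains I₂ and is closed under adjoints if and only if M₀ = c₀ I₂ + c₁ Y + c₂ Z for scalars c₀, c₁, c₂ ∈ ℂ with c₀ ≠ 0 and such that there exists c ∈ ℂ with c₁ = c·conj(c₁) and c₂ = c·conj(c₂). -/

import Mathlib

set_option maxHeartbeats 1000000

open Matrix

/-- The Pauli X matrix. -/
noncomputable def pauliX : Matrix (Fin 2) (Fin 2) ℂ := !![0, 1; 1, 0]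
/-- The Pauli Y matrix. -/
noncomputable def pauliY : Matrix (Fin 2) (Fin 2) ℂ := !![0, Complex.I; -Complex.I, 0]
/-- The Pauli Z matrix. -/
noncomputable def pauliZ : Matrix (Fin 2) (Fin 2) ℂ := !![1, 0; 0, -1]

lemma ct2 (a b c d : ℂ) :
    (!![a,b;c,d])ᴴ = !![(starRingEnd ℂ) a, (starRingEnd ℂ) c;
                        (starRingEnd ℂ) b, (starRingEnd ℂ) d] := by
  ext i j; fin_cases i <;> fin_cases j <;> simp [conjTranspose_apply]

lemma pauliX_conj (a b c d : ℂ) : pauliX * !![a,b;c,d] * pauliX = !![d,c;b,a] := by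
  simp [pauliX]

/-- For `M₀ ∈ M₂(ℂ)`, the subspace `𝒱_{M₀} = span{M₀, X M₀ X}` contains
`I₂` and is closed under adjoints iff `M₀ = c₀ I₂ + c₁ Y + c₂ Z` with `c₀ ≠ 0` and
there is `c ∈ ℂ` with `c₁ = c·conj(c₁)` and `c₂ = c·conj(c₂)`. -/
theorem statement3 (M₀ : Matrix (Fin 2) (Fin 2) ℂ) :
    ((1 : Matrix (Fin 2) (Fin 2) ℂ) ∈
        Submodule.span ℂ ({M₀, pauliX * M₀ * pauliX} : Set (Matrix (Fin 2) (Fin 2) ℂ)) ∧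
      ∀ A ∈ Submodule.span ℂ ({M₀, pauliX * M₀ * pauliX} : Set (Matrix (Fin 2) (Fin 2) ℂ)),
        Aᴴ ∈ Submodule.span ℂ ({M₀, pauliX * M₀ * pauliX} : Set (Matrix (Fin 2) (Fin 2) ℂ))) ↔
    ∃ c₀ c₁ c₂ : ℂ, c₀ ≠ 0 ∧
      (∃ c : ℂ, c₁ = c * (starRingEnd ℂ) c₁ ∧ c₂ = c * (starRingEnd ℂ) c₂) ∧
      M₀ = c₀ • (1 : Matrix (Fin 2) (Fin 2) ℂ) + c₁ • pauliY + c₂ • pauliZ := by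
  constructor
  · rintro ⟨h1, h2⟩
    set a := M₀ 0 0 with ha
    set b := M₀ 0 1 with hb
    set c := M₀ 1 0 with hcdef
    set d := M₀ 1 1 with hd
    have hM : M₀ = !![a,b;c,d] := Matrix.eta_fin_two M₀
    have hN : pauliX * M₀ * pauliX = !![d,c;b,a] := by rw [hM, pauliX_conj]
    rw [Submodule.mem_span_pair] at h1
    obtain ⟨α, β, hαβ⟩ := h1
    rw [hN, hM] at hαβ
    have e1 : α*a + β*d = 1 := by simpa using congrFun (congrFun hαβ 0) 0
    have e2 : α*b + β*c = 0 := by simpa using congrFun (congrFun hαβ 0) 1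
    have e3 : α*c + β*b = 0 := by simpa using congrFun (congrFun hαβ 1) 0
    have e4 : α*d + β*a = 1 := by simpa using congrFun (congrFun hαβ 1) 1
    have had : a + d ≠ 0 := by
      intro h0
      have h2' : (2:ℂ) = 0 := by linear_combination (α+β)*h0 - e1 - e4
      norm_num at h2'
    have hsum : α + β ≠ 0 := by
      intro h0
      have h2' : (2:ℂ) = 0 := by linear_combination (a+d)*h0 - e1 - e4
      norm_num at h2'
    have hbc : c = -b := by
      have h5 : (α+β)*(b+c) = 0 := by linear_combination e2 + e3
      rcases mul_eq_zero.mp h5 with h | h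
      · exact absurd h hsum
      · linear_combination h
    -- adjoint condition applied to M₀
    have hMmem : M₀ ∈ Submodule.span ℂ
        ({M₀, pauliX * M₀ * pauliX} : Set (Matrix (Fin 2) (Fin 2) ℂ)) :=
      Submodule.subset_span (Set.mem_insert _ _)
    have h3 := h2 M₀ hMmem
    rw [Submodule.mem_span_pair] at h3
    obtain ⟨γ, δ, hγδ⟩ := h3
    rw [hN, hM] at hγδ
    have f1 : γ*a + δ*d = (starRingEnd ℂ) a := by
      simpa [conjTranspose_apply] using congrFun (congrFun hγδ 0) 0
    have f2 : γ*b + δ*c = (starRingEnd ℂ) c := by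
      simpa [conjTranspose_apply] using congrFun (congrFun hγδ 0) 1
    have f4 : γ*d + δ*a = (starRingEnd ℂ) d := by
      simpa [conjTranspose_apply] using congrFun (congrFun hγδ 1) 1
    refine ⟨(a+d)/2, -Complex.I*b, (a-d)/2, ?_, ?_, ?_⟩
    · exact div_ne_zero had two_ne_zero
    · -- exists the scaling constant
      have ht1 : (starRingEnd ℂ) b = -(γ-δ)*b := by
        have : γ*b + δ*(-b) = (starRingEnd ℂ) (-b) := by rw [← hbc]; exact f2
        rw [map_neg] at this
        linear_combination this
      have ht2 : (starRingEnd ℂ) a - (starRingEnd ℂ) d = (γ-δ)*(a-d) := by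
        linear_combination f4 - f1
      by_cases hT : γ - δ = 0
      · have hb0 : b = 0 := by
          have : (starRingEnd ℂ) b = 0 := by rw [ht1, hT]; ring
          simpa using this
        have hadeq : a = d := by
          have : (starRingEnd ℂ) a = (starRingEnd ℂ) d := by
            have := ht2; rw [hT] at this
            linear_combination this
          exact (starRingEnd ℂ).injective this
        refine ⟨0, by simp [hb0], by simp [hadeq]⟩
      · refine ⟨(γ-δ)⁻¹, ?_, ?_⟩
        · rw [_root_.map_mul, map_neg, Complex.conj_I, ht1]
          field_simp
        · rw [map_div₀, map_sub]
          have h2c : (starRingEnd ℂ) (2:ℂ) = 2 := map_ofNat _ 2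
          rw [h2c, ht2]
          field_simp
        -- done
    · rw [hM]
      ext i j
      fin_cases i <;> fin_cases j <;>
        simp [pauliY, pauliZ, Matrix.one_apply, hbc] <;> ring_nf <;>
        simp [Complex.I_sq] <;> ring
  · rintro ⟨c₀, c₁, c₂, hc₀, ⟨c, hf1, hf2⟩, hMeq⟩
    have hM' : M₀ = !![c₀+c₂, Complex.I*c₁; -(Complex.I*c₁), c₀-c₂] := by
      rw [hMeq]
      ext i j
      fin_cases i <;> fin_cases j <;> simp [pauliY, pauliZ, Matrix.one_apply] <;> ring
    have hN : pauliX * M₀ * pauliX = !![c₀-c₂, -(Complex.I*c₁); Complex.I*c₁, c₀+c₂] := by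
      rw [hM', pauliX_conj]
    constructor
    · rw [Submodule.mem_span_pair]
      refine ⟨(2*c₀)⁻¹, (2*c₀)⁻¹, ?_⟩
      rw [hN, hM']
      ext i j
      fin_cases i <;> fin_cases j <;> simp [Matrix.one_apply] <;> field_simp <;> ring
    · intro A hA
      rw [Submodule.mem_span_pair] at hA ⊢
      obtain ⟨α, β, hAeq⟩ := hA
      rw [← hAeq]
      by_cases hc : c = 0
      · have h1 : c₁ = 0 := by rw [hf1, hc]; ring
        have h2' : c₂ = 0 := by rw [hf2, hc]; ring
        refine ⟨(starRingEnd ℂ) α * ((starRingEnd ℂ) c₀ / c₀),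
               (starRingEnd ℂ) β * ((starRingEnd ℂ) c₀ / c₀), ?_⟩
        rw [hN, hM', h1, h2']
        rw [conjTranspose_add, Matrix.conjTranspose_smul, Matrix.conjTranspose_smul, ct2, ct2]
        ext i j
        fin_cases i <;> fin_cases j <;>
          simp only [Matrix.add_apply, Matrix.smul_apply, Matrix.cons_val', Matrix.cons_val_zero,
            Matrix.cons_val_one, Matrix.head_cons, Matrix.head_fin_const, Matrix.empty_val',
            Matrix.cons_val_fin_one, smul_eq_mul, RCLike.star_def, map_add, _root_.map_mul,
            map_sub, map_neg, map_zero, Matrix.of_apply, Fin.zero_eta, Fin.mk_one, Complex.conj_I] <;>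
          field_simp <;> ring
      · have hk1 : (starRingEnd ℂ) c₁ = c⁻¹ * c₁ := by
          field_simp
          linear_combination -hf1
        have hk2 : (starRingEnd ℂ) c₂ = c⁻¹ * c₂ := by
          field_simp
          linear_combination -hf2
        refine ⟨(starRingEnd ℂ) α * (((starRingEnd ℂ) c₀ / c₀ + c⁻¹)/2)
                  + (starRingEnd ℂ) β * (((starRingEnd ℂ) c₀ / c₀ - c⁻¹)/2),
                (starRingEnd ℂ) α * (((starRingEnd ℂ) c₀ / c₀ - c⁻¹)/2)
                  + (starRingEnd ℂ) β * (((starRingEnd ℂ) c₀ / c₀ + c⁻¹)/2), ?_⟩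
        rw [hN, hM']
        rw [conjTranspose_add, Matrix.conjTranspose_smul, Matrix.conjTranspose_smul, ct2, ct2]
        ext i j
        fin_cases i <;> fin_cases j <;>
          simp only [Matrix.add_apply, Matrix.smul_apply, Matrix.cons_val', Matrix.cons_val_zero,
            Matrix.cons_val_one, Matrix.head_cons, Matrix.head_fin_const, Matrix.empty_val',
            Matrix.cons_val_fin_one, smul_eq_mul, RCLike.star_def, map_add, _root_.map_mul,
            map_sub, map_neg, map_zero, Matrix.of_apply, Fin.zero_eta, Fin.mk_one, Complex.conj_I, hk1, hk2] <;>
          field_simp <;> ring
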